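/- arXiv:1905.02883 — 4 statements merged into one kernel-verified Lean document; each statement's English description precedes it below -/
import Mathlib

section
/- Let (Ω,μ) = ∏_{i=1}^n (Ω_i,μ_i) be a finite product probability space in which each factor Ω_i is partially ordered and each μ_i is positively associated. Let A_1,…,A_k ⊆ Ω be events that are all increasing, define X(ω) = max{|I| : I ⊆ [k] and A_i, i ∈ I, occur disjointly at ω}, and set λ = Σ_{i=1}^k μ(A_i). Then for every t ≥ 0, μ({ω : X(ω) ≥ λ + t}) ≤ exp(−t²/(2(λ + t/3))). -/
open MeasureTheory ProbabilityTheory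

/-- The events `A j`, `j ∈ I`, occur disjointly at `ω`: there are pairwise disjoint
sets `S j ⊆ [n]` such that every `ω'` agreeing with `ω` on `S j` lies in `A j`. -/
def OccurDisjointly {n : ℕ} {Ω : Fin n → Type*} {ι : Type*}
    (A : ι → Set (∀ i, Ω i)) (I : Finset ι) (ω : ∀ i, Ω i) : Prop :=
  ∃ S : ι → Finset (Fin n),
    (∀ j ∈ I, ∀ j' ∈ I, j ≠ j' → Disjoint (S j) (S j')) ∧
    ∀ j ∈ I, ∀ ω' : ∀ i, Ω i, (∀ i ∈ S j, ω' i = ω i) → ω' ∈ A j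

/-- `X ω` is the maximum size of a set `I ⊆ [k]` such that the events
`A j`, `j ∈ I`, occur disjointly at `ω`. -/
noncomputable def maxDisjOcc {n k : ℕ} {Ω : Fin n → Type*}
    (A : Fin k → Set (∀ i, Ω i)) (ω : ∀ i, Ω i) : ℕ :=
  sSup {m : ℕ | ∃ I : Finset (Fin k), I.card = m ∧ OccurDisjointly A I ω}

/-- A probability measure on a partially ordered space is positively associated if
`m A * m B ≤ m (A ∩ B)` for all increasing (upper) sets `A, B`. -/
def PositivelyAssociated {Γ : Type*} [Preorder Γ] [MeasurableSpace Γ]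
    (m : Measure Γ) : Prop :=
  ∀ A B : Set Γ, IsUpperSet A → IsUpperSet B → m A * m B ≤ m (A ∩ B)

set_option linter.unusedSectionVars false
set_option maxHeartbeats 2000000
open scoped Classical

namespace BKaux


lemma meas_toReal_eq_sum {γ : Type*} [Fintype γ] [MeasurableSpace γ]
    [MeasurableSingletonClass γ] (m : Measure γ) [IsFiniteMeasure m] (E : Set γ) :
    (m E).toReal = ∑ x : γ, E.indicator (fun y => (m {y}).toReal) x := by
  have h1 : m E = ∑ x ∈ E.toFinset, m {x} := by
    conv_lhs => rw [show E = ⋃ x ∈ E.toFinset, ({x} : Set γ) by ext y; simp]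
    rw [measure_biUnion_finset]
    · intro a _ b _ hab
      simp [Function.onFun, Set.disjoint_singleton_left, hab]
    · exact fun b _ => measurableSet_singleton b
  rw [h1, ENNReal.toReal_sum (fun a _ => measure_ne_top m _)]
  calc ∑ x ∈ E.toFinset, (m {x}).toReal
      = ∑ x ∈ E.toFinset, E.indicator (fun y => (m {y}).toReal) x :=
        Finset.sum_congr rfl (fun x hx =>
          (Set.indicator_of_mem (Set.mem_toFinset.mp hx) (fun y => (m {y}).toReal)).symm)
    _ = ∑ x : γ, E.indicator (fun y => (m {y}).toReal) x :=
        Finset.sum_subset (Finset.subset_univ _)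
          (fun x _ hx => Set.indicator_of_notMem (fun hc => hx (Set.mem_toFinset.mpr hc))
            (fun y => (m {y}).toReal))

variable {n : ℕ} {Ω : Fin n → Type*} [∀ i, Fintype (Ω i)]
  [∀ i, MeasurableSpace (Ω i)] [∀ i, MeasurableSingletonClass (Ω i)]
  (μi : ∀ i, Measure (Ω i)) [∀ i, IsProbabilityMeasure (μi i)]

noncomputable def w (i : Fin n) (x : Ω i) : ℝ := (μi i {x}).toReal

noncomputable def Wt (ω : ∀ i, Ω i) : ℝ := ∏ i, w μi i (ω i)

noncomputable def Pr (E : Set (∀ i, Ω i)) : ℝ :=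
  ∑ ω : ∀ i, Ω i, E.indicator (Wt μi) ω

lemma w_nonneg (i : Fin n) (x : Ω i) : 0 ≤ w μi i x := ENNReal.toReal_nonneg

lemma sum_w (i : Fin n) : ∑ x : Ω i, w μi i x = 1 := by
  have h := meas_toReal_eq_sum (μi i) (Set.univ)
  simp only [Set.indicator_univ, measure_univ, ENNReal.toReal_one] at h
  simpa [w] using h.symm

lemma Wt_nonneg (ω : ∀ i, Ω i) : 0 ≤ Wt μi ω :=
  Finset.prod_nonneg fun i _ => w_nonneg μi i (ω i)

lemma sum_Wt : ∑ ω : ∀ i, Ω i, Wt μi ω = 1 := by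
  calc ∑ ω : ∀ i, Ω i, Wt μi ω
      = ∑ x ∈ Fintype.piFinset (fun _ => (Finset.univ : Finset _)), ∏ i, w μi i (x i) := by
        rw [Fintype.piFinset_univ]; rfl
    _ = ∏ i, ∑ x : Ω i, w μi i x := (Finset.prod_univ_sum _ _).symm
    _ = 1 := by simp [sum_w]

lemma Pr_nonneg (E : Set (∀ i, Ω i)) : 0 ≤ Pr μi E :=
  Finset.sum_nonneg fun ω _ => Set.indicator_nonneg (fun σ _ => Wt_nonneg μi σ) ω

lemma indicator_le_indicator_subset {γ : Type*} {E F : Set γ} (h : E ⊆ F)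
    {f : γ → ℝ} (hf : ∀ x, 0 ≤ f x) (x : γ) : E.indicator f x ≤ F.indicator f x := by
  by_cases hx : x ∈ E
  · rw [Set.indicator_of_mem hx, Set.indicator_of_mem (h hx)]
  · rw [Set.indicator_of_notMem hx]
    exact Set.indicator_nonneg (fun y _ => hf y) x

lemma Pr_mono {E F : Set (∀ i, Ω i)} (h : E ⊆ F) : Pr μi E ≤ Pr μi F :=
  Finset.sum_le_sum fun ω _ =>
    indicator_le_indicator_subset h (fun σ => Wt_nonneg μi σ) ω

lemma Pr_univ : Pr μi Set.univ = 1 := by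
  simp [Pr, Set.indicator_univ, sum_Wt]

lemma Pr_le_one (E : Set (∀ i, Ω i)) : Pr μi E ≤ 1 := by
  rw [← Pr_univ μi]; exact Pr_mono μi (Set.subset_univ E)

lemma measurableSet_all (E : Set (∀ i, Ω i)) : MeasurableSet E := by
  haveI : MeasurableSingletonClass (∀ i, Ω i) := by
    constructor
    intro ω
    have h : ({ω} : Set (∀ i, Ω i)) = Set.pi Set.univ (fun i => {ω i}) := by
      ext σ; simp [Set.mem_pi, funext_iff]
    rw [h]
    exact MeasurableSet.pi (Set.countable_univ) (fun i _ => measurableSet_singleton _)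
  exact (Set.toFinite E).measurableSet

lemma Pr_eq_measure (E : Set (∀ i, Ω i)) : (Measure.pi μi E).toReal = Pr μi E := by
  rw [meas_toReal_eq_sum (Measure.pi μi) E, Pr]
  apply Finset.sum_congr rfl
  intro ω _
  by_cases h : ω ∈ E
  · rw [Set.indicator_of_mem h, Set.indicator_of_mem h]
    have hs : ({ω} : Set (∀ i, Ω i)) = Set.pi Set.univ (fun i => {ω i}) := by
      ext σ; simp [Set.mem_pi, funext_iff]
    rw [hs, Measure.pi_pi, Wt, ENNReal.toReal_prod]
    rfl
  · rw [Set.indicator_of_notMem h, Set.indicator_of_notMem h]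

def cert (S : Finset (Fin n)) (ν : ∀ i, Ω i) (E : Set (∀ i, Ω i)) : Prop :=
  ∀ ω' : ∀ i, Ω i, (∀ i ∈ S, ω' i = ν i) → ω' ∈ E

lemma cert_congr {S : Finset (Fin n)} {ν ν' : ∀ i, Ω i} {E : Set (∀ i, Ω i)}
    (h : ∀ i ∈ S, ν i = ν' i) (hc : cert S ν E) : cert S ν' E := by
  intro ω' hω'
  exact hc ω' fun i hi => (hω' i hi).trans (h i hi).symm

lemma cert_mono {S S' : Finset (Fin n)} {ν : ∀ i, Ω i} {E : Set (∀ i, Ω i)}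
    (hS : S ⊆ S') (hc : cert S ν E) : cert S' ν E :=
  fun ω' hω' => hc ω' fun i hi => hω' i (hS hi)

lemma cert_self {S : Finset (Fin n)} {ν : ∀ i, Ω i} {E : Set (∀ i, Ω i)}
    (hc : cert S ν E) : ν ∈ E := hc ν fun _ _ => rfl

section order
variable [∀ i, PartialOrder (Ω i)]

lemma cert_upper {S : Finset (Fin n)} {ν ν' : ∀ i, Ω i} {E : Set (∀ i, Ω i)}
    (hE : IsUpperSet E) (hle : ∀ i ∈ S, ν i ≤ ν' i) (hc : cert S ν E) : cert S ν' E := by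
  intro ω' hω'
  set ω'' : ∀ i, Ω i := fun i => if h : i ∈ S then ν i else ω' i with hω''
  have h1 : ω'' ∈ E := hc ω'' fun i hi => by simp [hω'', hi]
  have h2 : ω'' ≤ ω' := by
    intro i
    by_cases hi : i ∈ S
    · simp only [hω'', dif_pos hi]
      exact (hle i hi).trans_eq (hω' i hi).symm
    · simp [hω'', hi]
  exact hE h2 h1

end order

lemma Wt_update (ω : ∀ i, Ω i) (j : Fin n) (x : Ω j) :
    Wt μi (Function.update ω j x) * w μi j (ω j) = Wt μi ω * w μi j x := by
  have h : ∀ (σ : ∀ i, Ω i), Wt μi σ = w μi j (σ j) * ∏ i ∈ Finset.univ.erase j, w μi i (σ i) :=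
    fun σ => (Finset.mul_prod_erase Finset.univ (fun i => w μi i (σ i)) (Finset.mem_univ j)).symm
  rw [h (Function.update ω j x), h ω]
  have he : ∏ i ∈ Finset.univ.erase j, w μi i (Function.update ω j x i)
      = ∏ i ∈ Finset.univ.erase j, w μi i (ω i) := by
    apply Finset.prod_congr rfl
    intro i hi
    rw [Function.update_of_ne (Finset.mem_erase.mp hi).1]
  rw [he, Function.update_self]
  ring

lemma resample (j : Fin n) (g : (∀ i, Ω i) → ℝ) :
    ∑ ω : ∀ i, Ω i, Wt μi ω * g ω
      = ∑ ω : ∀ i, Ω i, Wt μi ω * ∑ x : Ω j, w μi j x * g (Function.update ω j x) := by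
  symm
  have hupd : ∀ (ω : ∀ i, Ω i) (x : Ω j),
      Function.update (Function.update ω j x) j (ω j) = ω := by
    intro ω x
    funext i
    by_cases hi : i = j
    · subst hi; simp
    · simp [Function.update_of_ne hi]
  have hinv : Function.Involutive
      (fun p : (∀ i, Ω i) × Ω j => (Function.update p.1 j p.2, p.1 j)) := by
    intro p
    simp only [hupd, Function.update_self]
  have key : ∀ F : (∀ i, Ω i) × Ω j → ℝ,
      ∑ p : (∀ i, Ω i) × Ω j, F ((hinv.toPerm _) p) = ∑ p : (∀ i, Ω i) × Ω j, F p :=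
    fun F => Equiv.sum_comp (hinv.toPerm _) F
  calc ∑ ω : ∀ i, Ω i, Wt μi ω * ∑ x : Ω j, w μi j x * g (Function.update ω j x)
      = ∑ p : (∀ i, Ω i) × Ω j, Wt μi p.1 * w μi j p.2 * g (Function.update p.1 j p.2) := by
        rw [Fintype.sum_prod_type]
        exact Finset.sum_congr rfl fun ω _ => by rw [Finset.mul_sum]; exact Finset.sum_congr rfl fun x _ => by ring
    _ = ∑ p : (∀ i, Ω i) × Ω j,
          Wt μi (Function.update p.1 j p.2) * w μi j (p.1 j) * g p.1 := by
        rw [← key fun p => Wt μi p.1 * w μi j p.2 * g (Function.update p.1 j p.2)]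
        apply Finset.sum_congr rfl
        intro p _
        simp [hupd]
    _ = ∑ p : (∀ i, Ω i) × Ω j, Wt μi p.1 * w μi j p.2 * g p.1 := by
        apply Finset.sum_congr rfl
        intro p _
        rw [Wt_update]
    _ = ∑ ω : ∀ i, Ω i, Wt μi ω * g ω := by
        rw [Fintype.sum_prod_type]
        apply Finset.sum_congr rfl
        intro ω _
        have hy : ∀ y : Ω j, Wt μi (ω, y).1 * w μi j (ω, y).2 * g (ω, y).1
            = (Wt μi ω * g ω) * w μi j y := fun y => by ring
        simp only [hy, ← Finset.mul_sum, sum_w, mul_one]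

/-- two-event disjoint occurrence -/
def Dis2 (Aa Bb : Set (∀ i, Ω i)) : Set (∀ i, Ω i) :=
  {ω | ∃ S T : Finset (Fin n), Disjoint S T ∧ cert S ω Aa ∧ cert T ω Bb}

def mix (J : Finset (Fin n)) (ω ωt : ∀ i, Ω i) : ∀ i, Ω i :=
  fun i => if i ∈ J then ωt i else ω i

def DD (Aa Bb : Set (∀ i, Ω i)) (J : Finset (Fin n)) : Set ((∀ i, Ω i) × ∀ i, Ω i) :=
  {p | ∃ S T : Finset (Fin n), Disjoint S T ∧ cert S p.1 Aa ∧ cert T (mix J p.1 p.2) Bb}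

noncomputable def ind (E : Set ((∀ i, Ω i) × ∀ i, Ω i)) (p : (∀ i, Ω i) × ∀ i, Ω i) : ℝ :=
  if p ∈ E then 1 else 0

noncomputable def P2 (E : Set ((∀ i, Ω i) × ∀ i, Ω i)) : ℝ :=
  ∑ ω : ∀ i, Ω i, Wt μi ω * ∑ ωt : ∀ i, Ω i, Wt μi ωt * ind E (ω, ωt)

lemma ind_nonneg (E) (p) : 0 ≤ ind (Ω := Ω) E p := by
  unfold ind; positivity

lemma P2_expand (j : Fin n) (E : Set ((∀ i, Ω i) × ∀ i, Ω i)) :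
    P2 μi E = ∑ ω : ∀ i, Ω i, Wt μi ω * ∑ ωt : ∀ i, Ω i, Wt μi ωt *
      ∑ x : Ω j, w μi j x * ∑ y : Ω j, w μi j y *
        ind E (Function.update ω j x, Function.update ωt j y) := by
  rw [P2, resample μi j (fun ω => ∑ ωt : ∀ i, Ω i, Wt μi ωt * ind E (ω, ωt))]
  apply Finset.sum_congr rfl
  intro ω _
  congr 1
  have h1 : ∀ x : Ω j, ∑ ωt : ∀ i, Ω i, Wt μi ωt * ind E (Function.update ω j x, ωt)
      = ∑ ωt : ∀ i, Ω i, Wt μi ωt * ∑ y : Ω j, w μi j y *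
          ind E (Function.update ω j x, Function.update ωt j y) :=
    fun x => resample μi j (fun ωt => ind E (Function.update ω j x, ωt))
  simp only [h1, Finset.mul_sum]
  rw [Finset.sum_comm]
  apply Finset.sum_congr rfl
  intro ωt _
  apply Finset.sum_congr rfl
  intro x _
  apply Finset.sum_congr rfl
  intro y _
  ring

section step
variable [∀ i, PartialOrder (Ω i)]

lemma msum_PA (hPA : ∀ i, PositivelyAssociated (μi i)) (j : Fin n)
    (E1 E2 : Set (Ω j)) (h1 : IsUpperSet E1) (h2 : IsUpperSet E2) :
    (∑ x : Ω j, E1.indicator (w μi j) x) * (∑ x : Ω j, E2.indicator (w μi j) x) ≤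
      ∑ x : Ω j, (E1 ∩ E2).indicator (w μi j) x := by
  have e : ∀ E : Set (Ω j), (∑ x : Ω j, E.indicator (w μi j) x) = ((μi j) E).toReal :=
    fun E => (meas_toReal_eq_sum (μi j) E).symm
  rw [e E1, e E2, e (E1 ∩ E2)]
  rw [← ENNReal.toReal_mul]
  exact ENNReal.toReal_mono (measure_ne_top _ _) (hPA j E1 E2 h1 h2)

/-- the key one-coordinate step -/
lemma step (Aa Bb : Set (∀ i, Ω i)) (hAa : IsUpperSet Aa) (hBb : IsUpperSet Bb)
    (hPA : ∀ i, PositivelyAssociated (μi i)) (J : Finset (Fin n)) (j : Fin n) (hj : j ∉ J) :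
    P2 μi (DD Aa Bb J) ≤ P2 μi (DD Aa Bb (insert j J)) := by
  rw [P2_expand μi j, P2_expand μi j (DD Aa Bb (insert j J))]
  apply Finset.sum_le_sum; intro ω _
  apply mul_le_mul_of_nonneg_left ?_ (Wt_nonneg μi ω)
  apply Finset.sum_le_sum; intro ωt _
  apply mul_le_mul_of_nonneg_left ?_ (Wt_nonneg μi ωt)
  set ν₀ : ∀ i, Ω i := mix J ω ωt with hν₀
  set E1 : Set (Ω j) := {x | ∃ S T : Finset (Fin n), Disjoint S T ∧ j ∈ S ∧
    cert S (Function.update ω j x) Aa ∧ cert T ν₀ Bb} with hE1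
  set E2 : Set (Ω j) := {v | ∃ S T : Finset (Fin n), Disjoint S T ∧ j ∈ T ∧
    cert S ω Aa ∧ cert T (Function.update ν₀ j v) Bb} with hE2
  have hmix1 : ∀ (x y : Ω j),
      mix J (Function.update ω j x) (Function.update ωt j y) = Function.update ν₀ j x := by
    intro x y; funext i
    by_cases hi : i = j
    · subst hi; simp [mix, hj]
    · by_cases hiJ : i ∈ J <;>
        simp [hν₀, mix, hiJ, Function.update_of_ne hi]
  have hmix2 : ∀ (x y : Ω j),
      mix (insert j J) (Function.update ω j x) (Function.update ωt j y)
        = Function.update ν₀ j y := by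
    intro x y; funext i
    by_cases hi : i = j
    · subst hi; simp [mix]
    · have hins : i ∈ insert j J ↔ i ∈ J := by simp [hi]
      by_cases hiJ : i ∈ J <;>
        simp [hν₀, mix, hins, hiJ, Function.update_of_ne hi]
  have hagree : ∀ (x : Ω j) (T : Finset (Fin n)), j ∉ T →
      ∀ i ∈ T, ν₀ i = Function.update ν₀ j x i := by
    intro x T hjT i hi
    rw [Function.update_of_ne (fun h : i = j => hjT (by cases h; exact hi))]
  have hDJ : ∀ x y : Ω j,
      (Function.update ω j x, Function.update ωt j y) ∈ DD Aa Bb J ↔ x ∈ E1 ∪ E2 := by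
    intro x y
    constructor
    · rintro ⟨S, T, hdisj, hc1, hc2⟩
      rw [hmix1] at hc2
      by_cases hjT : j ∈ T
      · right
        refine ⟨S, T, hdisj, hjT, ?_, hc2⟩
        have hjS : j ∉ S := fun h => (Finset.disjoint_left.mp hdisj h) hjT
        exact cert_congr (fun i hi =>
          Function.update_of_ne (fun h : i = j => hjS (by cases h; exact hi)) x ω) hc1
      · left
        have hc2' : cert T ν₀ Bb := cert_congr (fun i hi =>
            Function.update_of_ne (fun h : i = j => hjT (by cases h; exact hi)) x ν₀) hc2
        by_cases hjS : j ∈ S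
        · exact ⟨S, T, hdisj, hjS, hc1, hc2'⟩
        · refine ⟨insert j S, T, ?_, Finset.mem_insert_self j S,
            cert_mono (Finset.subset_insert j S) hc1, hc2'⟩
          rw [Finset.disjoint_insert_left]
          exact ⟨hjT, hdisj⟩
    · rintro (⟨S, T, hdisj, hjS, hc1, hc2⟩ | ⟨S, T, hdisj, hjT, hc1, hc2⟩)
      · have hjT : j ∉ T := fun h => (Finset.disjoint_left.mp hdisj hjS) h
        refine ⟨S, T, hdisj, hc1, ?_⟩
        rw [hmix1]
        exact cert_congr (hagree x T hjT) hc2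
      · have hjS : j ∉ S := fun h => (Finset.disjoint_left.mp hdisj h) hjT
        refine ⟨S, T, hdisj, ?_, ?_⟩
        · exact cert_congr (fun i hi =>
            (Function.update_of_ne (fun h : i = j => hjS (by cases h; exact hi)) x ω).symm) hc1
        · rw [hmix1]; exact hc2
  have hDJ' : ∀ x y : Ω j, (x ∈ E1 ∨ y ∈ E2) →
      (Function.update ω j x, Function.update ωt j y) ∈ DD Aa Bb (insert j J) := by
    rintro x y (⟨S, T, hdisj, hjS, hc1, hc2⟩ | ⟨S, T, hdisj, hjT, hc1, hc2⟩)
    · have hjT : j ∉ T := fun h => (Finset.disjoint_left.mp hdisj hjS) h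
      refine ⟨S, T, hdisj, hc1, ?_⟩
      rw [hmix2]
      exact cert_congr (hagree y T hjT) hc2
    · have hjS : j ∉ S := fun h => (Finset.disjoint_left.mp hdisj h) hjT
      refine ⟨S, T, hdisj, ?_, ?_⟩
      · exact cert_congr (fun i hi =>
          (Function.update_of_ne (fun h : i = j => hjS (by cases h; exact hi)) x ω).symm) hc1
      · rw [hmix2]; exact hc2
  have hUp1 : IsUpperSet E1 := by
    intro x x' hxx' ⟨S, T, hdisj, hjS, hc1, hc2⟩
    refine ⟨S, T, hdisj, hjS, ?_, hc2⟩
    apply cert_upper hAa ?_ hc1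
    intro i hi
    by_cases h : i = j
    · subst h; simp [hxx']
    · simp [Function.update_of_ne h]
  have hUp2 : IsUpperSet E2 := by
    intro v v' hvv' ⟨S, T, hdisj, hjT, hc1, hc2⟩
    refine ⟨S, T, hdisj, hjT, hc1, ?_⟩
    apply cert_upper hBb ?_ hc2
    intro i hi
    by_cases h : i = j
    · subst h; simp [hvv']
    · simp [Function.update_of_ne h]
  set a : ℝ := ∑ x : Ω j, E1.indicator (w μi j) x with ha
  set b : ℝ := ∑ x : Ω j, E2.indicator (w μi j) x with hb
  have hLHS : ∑ x : Ω j, w μi j x * ∑ y : Ω j, w μi j y *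
      ind (DD Aa Bb J) (Function.update ω j x, Function.update ωt j y)
      = ∑ x : Ω j, (E1 ∪ E2).indicator (w μi j) x := by
    apply Finset.sum_congr rfl
    intro x _
    have h : ∀ y : Ω j, ind (DD Aa Bb J) (Function.update ω j x, Function.update ωt j y)
        = if x ∈ E1 ∪ E2 then 1 else 0 := by
      intro y; unfold ind
      by_cases h : x ∈ E1 ∪ E2
      · rw [if_pos ((hDJ x y).mpr h), if_pos h]
      · rw [if_neg (fun hh => h ((hDJ x y).mp hh)), if_neg h]
    simp only [h]
    rw [← Finset.sum_mul, sum_w, one_mul]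
    by_cases h : x ∈ E1 ∪ E2 <;> simp [Set.indicator_apply, h]
  have hRHS : a + b - a * b ≤ ∑ x : Ω j, w μi j x * ∑ y : Ω j, w μi j y *
      ind (DD Aa Bb (insert j J)) (Function.update ω j x, Function.update ωt j y) := by
    have hptwise : ∀ x y : Ω j,
        (if x ∈ E1 then (1:ℝ) else 0) + (if y ∈ E2 then 1 else 0)
          - (if x ∈ E1 then (1:ℝ) else 0) * (if y ∈ E2 then 1 else 0)
        ≤ ind (DD Aa Bb (insert j J)) (Function.update ω j x, Function.update ωt j y) := by
      intro x y
      unfold ind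
      by_cases h1 : x ∈ E1
      · rw [if_pos (hDJ' x y (Or.inl h1))]
        by_cases h2 : y ∈ E2 <;> simp [h1, h2]
      · by_cases h2 : y ∈ E2
        · rw [if_pos (hDJ' x y (Or.inr h2))]
          simp [h1, h2]
        · simp only [h1, h2, if_false]
          norm_num
          split <;> norm_num
    calc a + b - a * b
        = ∑ x : Ω j, w μi j x * ∑ y : Ω j, w μi j y *
            ((if x ∈ E1 then (1:ℝ) else 0) + (if y ∈ E2 then 1 else 0)
              - (if x ∈ E1 then (1:ℝ) else 0) * (if y ∈ E2 then 1 else 0)) := by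
          have hy : ∀ x : Ω j, ∑ y : Ω j, w μi j y *
              ((if x ∈ E1 then (1:ℝ) else 0) + (if y ∈ E2 then 1 else 0)
                - (if x ∈ E1 then (1:ℝ) else 0) * (if y ∈ E2 then 1 else 0))
              = (if x ∈ E1 then (1:ℝ) else 0) + b
                - (if x ∈ E1 then (1:ℝ) else 0) * b := by
            intro x
            have expand : ∀ y : Ω j, w μi j y *
                ((if x ∈ E1 then (1:ℝ) else 0) + (if y ∈ E2 then 1 else 0)
                  - (if x ∈ E1 then (1:ℝ) else 0) * (if y ∈ E2 then 1 else 0))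
                = (if x ∈ E1 then (1:ℝ) else 0) * w μi j y
                  + (1 - (if x ∈ E1 then (1:ℝ) else 0)) * E2.indicator (w μi j) y := by
              intro y
              by_cases h1 : x ∈ E1 <;> by_cases h2 : y ∈ E2 <;>
                simp [h1, h2, Set.indicator_apply] <;> ring
            simp only [expand]
            rw [Finset.sum_add_distrib, ← Finset.mul_sum, ← Finset.mul_sum, sum_w, ← hb]
            ring
          simp only [hy]
          have expand2 : ∀ x : Ω j, w μi j x *
              ((if x ∈ E1 then (1:ℝ) else 0) + b - (if x ∈ E1 then (1:ℝ) else 0) * b)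
              = (1 - b) * E1.indicator (w μi j) x + b * w μi j x := by
            intro x
            by_cases h1 : x ∈ E1 <;> simp [h1, Set.indicator_apply] <;> ring
          simp only [expand2]
          rw [Finset.sum_add_distrib, ← Finset.mul_sum, ← Finset.mul_sum, sum_w, ← ha]
          ring
      _ ≤ _ := by
          apply Finset.sum_le_sum; intro x _
          apply mul_le_mul_of_nonneg_left ?_ (w_nonneg μi j x)
          apply Finset.sum_le_sum; intro y _
          exact mul_le_mul_of_nonneg_left (hptwise x y) (w_nonneg μi j y)
  rw [hLHS]
  refine le_trans ?_ hRHS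
  have hie : (∑ x : Ω j, (E1 ∪ E2).indicator (w μi j) x)
      + (∑ x : Ω j, (E1 ∩ E2).indicator (w μi j) x) = a + b := by
    rw [ha, hb, ← Finset.sum_add_distrib, ← Finset.sum_add_distrib]
    apply Finset.sum_congr rfl
    intro x _
    by_cases h1 : x ∈ E1 <;> by_cases h2 : x ∈ E2 <;>
      simp [Set.indicator_apply, h1, h2]
  have hpa : a * b ≤ ∑ x : Ω j, (E1 ∩ E2).indicator (w μi j) x :=
    msum_PA μi hPA j E1 E2 hUp1 hUp2
  linarith [hpa, hie]

/-- telescoping: D ∅ to D J -/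
lemma teleskop (Aa Bb : Set (∀ i, Ω i)) (hAa : IsUpperSet Aa) (hBb : IsUpperSet Bb)
    (hPA : ∀ i, PositivelyAssociated (μi i)) (J : Finset (Fin n)) :
    P2 μi (DD Aa Bb ∅) ≤ P2 μi (DD Aa Bb J) := by
  induction J using Finset.induction_on with
  | empty => exact le_refl _
  | insert _ _ hj ih => exact le_trans ih (step μi Aa Bb hAa hBb hPA _ _ hj)

lemma P2_empty (Aa Bb : Set (∀ i, Ω i)) : P2 μi (DD Aa Bb ∅) = Pr μi (Dis2 Aa Bb) := by
  have hm : ∀ ω ωt : ∀ i, Ω i, mix (∅ : Finset (Fin n)) ω ωt = ω := by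
    intro ω ωt; funext i; simp [mix]
  have h : ∀ ω ωt : ∀ i, Ω i, ind (DD Aa Bb ∅) (ω, ωt)
      = if ω ∈ Dis2 Aa Bb then 1 else 0 := by
    intro ω ωt
    unfold ind DD Dis2
    simp [hm]
  unfold P2
  simp only [h]
  have h2 : ∀ ω : ∀ i, Ω i, ∑ ωt : ∀ i, Ω i, Wt μi ωt * (if ω ∈ Dis2 Aa Bb then (1:ℝ) else 0)
      = if ω ∈ Dis2 Aa Bb then (1:ℝ) else 0 := by
    intro ω
    rw [← Finset.sum_mul, sum_Wt, one_mul]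
  simp only [h2]
  unfold Pr
  apply Finset.sum_congr rfl
  intro ω _
  by_cases hω : ω ∈ Dis2 Aa Bb <;> simp [Set.indicator_apply, hω]

lemma P2_univ_le (Aa Bb : Set (∀ i, Ω i)) :
    P2 μi (DD Aa Bb Finset.univ) ≤ Pr μi Aa * Pr μi Bb := by
  have hm : ∀ ω ωt : ∀ i, Ω i, mix (Finset.univ : Finset (Fin n)) ω ωt = ωt := by
    intro ω ωt; funext i; simp [mix]
  unfold P2
  have hb : ∀ (ω ωt : ∀ i, Ω i), Wt μi ωt * ind (DD Aa Bb Finset.univ) (ω, ωt)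
      ≤ Wt μi ωt * (Aa.indicator (fun _ => (1:ℝ)) ω * Bb.indicator (fun _ => (1:ℝ)) ωt) := by
    intro ω ωt
    apply mul_le_mul_of_nonneg_left ?_ (Wt_nonneg μi ωt)
    unfold ind
    by_cases h : (ω, ωt) ∈ DD Aa Bb Finset.univ
    · rw [if_pos h]
      obtain ⟨S, T, _, hc1, hc2⟩ := h
      rw [hm] at hc2
      rw [Set.indicator_of_mem (cert_self hc1), Set.indicator_of_mem (cert_self hc2)]
      norm_num
    · rw [if_neg h]
      exact mul_nonneg (Set.indicator_nonneg (fun _ _ => zero_le_one) _)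
        (Set.indicator_nonneg (fun _ _ => zero_le_one) _)
  calc ∑ ω : ∀ i, Ω i, Wt μi ω * ∑ ωt : ∀ i, Ω i, Wt μi ωt * ind (DD Aa Bb Finset.univ) (ω, ωt)
      ≤ ∑ ω : ∀ i, Ω i, Wt μi ω * ∑ ωt : ∀ i, Ω i, Wt μi ωt *
          (Aa.indicator (fun _ => (1:ℝ)) ω * Bb.indicator (fun _ => (1:ℝ)) ωt) := by
        apply Finset.sum_le_sum; intro ω _
        apply mul_le_mul_of_nonneg_left ?_ (Wt_nonneg μi ω)
        exact Finset.sum_le_sum fun ωt _ => hb ω ωt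
    _ = ∑ ω : ∀ i, Ω i, Aa.indicator (Wt μi) ω * Pr μi Bb := by
        apply Finset.sum_congr rfl
        intro ω _
        have hpt : ∀ ωt, Wt μi ωt *
            (Aa.indicator (fun _ => (1:ℝ)) ω * Bb.indicator (fun _ => (1:ℝ)) ωt)
            = Aa.indicator (fun _ => (1:ℝ)) ω * Bb.indicator (Wt μi) ωt := by
          intro ωt
          by_cases h1 : ω ∈ Aa <;> by_cases h2 : ωt ∈ Bb <;>
            simp [Set.indicator_apply, h1, h2]
        simp only [hpt]
        rw [← Finset.mul_sum]
        show Wt μi ω * (Aa.indicator (fun _ => (1:ℝ)) ω * Pr μi Bb) = _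
        by_cases h1 : ω ∈ Aa <;> simp [Set.indicator_apply, h1]
    _ = Pr μi Aa * Pr μi Bb := by
        rw [← Finset.sum_mul]
        rfl


/-- the two-event BK inequality -/
lemma bk2 (Aa Bb : Set (∀ i, Ω i)) (hAa : IsUpperSet Aa) (hBb : IsUpperSet Bb)
    (hPA : ∀ i, PositivelyAssociated (μi i)) :
    Pr μi (Dis2 Aa Bb) ≤ Pr μi Aa * Pr μi Bb := by
  rw [← P2_empty]
  exact le_trans (teleskop μi Aa Bb hAa hBb hPA Finset.univ) (P2_univ_le μi Aa Bb)

def DisOcSet {k : ℕ} (A : Fin k → Set (∀ i, Ω i)) (I : Finset (Fin k)) :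
    Set (∀ i, Ω i) := {ω | OccurDisjointly A I ω}

lemma disOc_empty {k : ℕ} (A : Fin k → Set (∀ i, Ω i)) (ω : ∀ i, Ω i) :
    OccurDisjointly A (∅ : Finset (Fin k)) ω :=
  ⟨fun _ => ∅, by simp, by simp⟩

lemma disOc_mono {k : ℕ} {A : Fin k → Set (∀ i, Ω i)} {I J : Finset (Fin k)}
    (hIJ : I ⊆ J) {ω : ∀ i, Ω i} (h : OccurDisjointly A J ω) : OccurDisjointly A I ω := by
  obtain ⟨S, hd, hc⟩ := h
  exact ⟨S, fun j hj j' hj' hne => hd j (hIJ hj) j' (hIJ hj') hne,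
    fun j hj => hc j (hIJ hj)⟩

lemma disOc_upper {k : ℕ} {A : Fin k → Set (∀ i, Ω i)} (hA : ∀ j, IsUpperSet (A j))
    (I : Finset (Fin k)) : IsUpperSet (DisOcSet (Ω := Ω) A I) := by
  intro ω σ hωσ ⟨S, hd, hc⟩
  refine ⟨S, hd, fun j hj => ?_⟩
  exact cert_upper (hA j) (fun i _ => hωσ i) (hc j hj)

lemma disOc_insert {k : ℕ} {A : Fin k → Set (∀ i, Ω i)} {I : Finset (Fin k)}
    {j : Fin k} (hj : j ∉ I) :
    DisOcSet (Ω := Ω) A (insert j I) ⊆ Dis2 (A j) (DisOcSet A I) := by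
  rintro ω ⟨S, hd, hc⟩
  refine ⟨S j, I.biUnion S, ?_, hc j (Finset.mem_insert_self j I), ?_⟩
  · rw [Finset.disjoint_biUnion_right]
    intro j' hj'
    exact hd j (Finset.mem_insert_self j I) j' (Finset.mem_insert_of_mem hj')
      (fun h => hj (h ▸ hj'))
  · intro ω' hω'
    refine ⟨S, fun a ha a' ha' hne => hd a (Finset.mem_insert_of_mem ha)
      a' (Finset.mem_insert_of_mem ha') hne, fun a ha => ?_⟩
    intro ω'' hω''
    apply hc a (Finset.mem_insert_of_mem ha) ω''
    intro i hi
    rw [hω'' i hi, hω' i (Finset.mem_biUnion.mpr ⟨a, ha, hi⟩)]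

lemma bkI {k : ℕ} {A : Fin k → Set (∀ i, Ω i)} (hA : ∀ j, IsUpperSet (A j))
    (hPA : ∀ i, PositivelyAssociated (μi i)) (I : Finset (Fin k)) :
    Pr μi (DisOcSet A I) ≤ ∏ j ∈ I, Pr μi (A j) := by
  induction I using Finset.induction_on with
  | empty =>
      rw [show DisOcSet (Ω := Ω) A ∅ = Set.univ from
        Set.eq_univ_of_forall (disOc_empty A), Pr_univ]
      simp
  | @insert j I hj ih =>
      rw [Finset.prod_insert hj]
      calc Pr μi (DisOcSet A (insert j I))
          ≤ Pr μi (Dis2 (A j) (DisOcSet A I)) := Pr_mono μi (disOc_insert hj)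
        _ ≤ Pr μi (A j) * Pr μi (DisOcSet A I) :=
            bk2 μi (A j) (DisOcSet A I) (hA j) (disOc_upper hA I) hPA
        _ ≤ Pr μi (A j) * ∏ j' ∈ I, Pr μi (A j') :=
            mul_le_mul_of_nonneg_left ih (Pr_nonneg μi (A j))


lemma maxDisjOcc_spec {k : ℕ} (A : Fin k → Set (∀ i, Ω i)) (ω : ∀ i, Ω i) :
    ∃ I : Finset (Fin k), I.card = maxDisjOcc A ω ∧ OccurDisjointly A I ω := by
  have hne : {m : ℕ | ∃ I : Finset (Fin k), I.card = m ∧ OccurDisjointly A I ω}.Nonempty :=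
    ⟨0, ∅, Finset.card_empty, disOc_empty A ω⟩
  have hbdd : BddAbove {m : ℕ | ∃ I : Finset (Fin k), I.card = m ∧ OccurDisjointly A I ω} := by
    refine ⟨k, fun m ⟨I, hI, _⟩ => ?_⟩
    rw [← hI]
    exact le_trans (Finset.card_le_univ I) (le_of_eq (Finset.card_fin k))
  exact Nat.sSup_mem hne hbdd

lemma maxDisjOcc_le {k : ℕ} (A : Fin k → Set (∀ i, Ω i)) (ω : ∀ i, Ω i) : maxDisjOcc A ω ≤ k := by
  obtain ⟨I, hI, _⟩ := maxDisjOcc_spec A ω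
  rw [← hI]
  exact le_trans (Finset.card_le_univ I) (le_of_eq (Finset.card_fin k))

/-- pointwise binomial-coefficient bound -/
lemma choose_le_sum {k : ℕ} (A : Fin k → Set (∀ i, Ω i)) (ω : ∀ i, Ω i) (s : ℕ) :
    (((maxDisjOcc A ω).choose s : ℕ) : ℝ)
      ≤ ∑ I ∈ Finset.univ.powersetCard s, (if OccurDisjointly A I ω then (1:ℝ) else 0) := by
  obtain ⟨I₀, hI₀, hocc⟩ := maxDisjOcc_spec A ω
  calc (((maxDisjOcc A ω).choose s : ℕ) : ℝ)
      = ∑ I ∈ I₀.powersetCard s, (1 : ℝ) := by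
        rw [Finset.sum_const, Finset.card_powersetCard, hI₀, nsmul_eq_mul, mul_one]
    _ = ∑ I ∈ I₀.powersetCard s, (if OccurDisjointly A I ω then (1:ℝ) else 0) := by
        apply Finset.sum_congr rfl
        intro I hI
        rw [if_pos (disOc_mono (Finset.mem_powersetCard.mp hI).1 hocc)]
    _ ≤ _ := by
        apply Finset.sum_le_sum_of_subset_of_nonneg
          (Finset.powersetCard_mono (Finset.subset_univ I₀))
        intro I _ _
        by_cases h : OccurDisjointly A I ω <;> simp [h]


lemma two_mul_three_pow_le_factorial (m : ℕ) : 2 * 3 ^ m ≤ (m + 2).factorial := by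
  induction m with
  | zero => simp [Nat.factorial]
  | succ m ih =>
      have h3 : 3 ≤ m + 3 := by omega
      calc 2 * 3 ^ (m + 1) = 3 * (2 * 3 ^ m) := by ring
        _ ≤ 3 * (m + 2).factorial := by omega
        _ ≤ (m + 3) * (m + 2).factorial := Nat.mul_le_mul_right _ h3
        _ = (m + 3).factorial := (Nat.factorial_succ (m + 2)).symm

lemma exp_upper {θ : ℝ} (h0 : 0 ≤ θ) (h3 : θ < 3) :
    Real.exp θ ≤ 1 + θ + θ ^ 2 / (2 * (1 - θ / 3)) := by
  have hsummable : Summable (fun m => θ ^ m / (m.factorial : ℝ)) :=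
    Real.summable_pow_div_factorial θ
  have hexp : Real.exp θ = ∑' m : ℕ, θ ^ m / (m.factorial : ℝ) := by
    rw [Real.exp_eq_exp_ℝ, NormedSpace.exp_eq_tsum_div]
  have hsplit : Real.exp θ
      = (∑ i ∈ Finset.range 2, θ ^ i / (i.factorial : ℝ))
        + ∑' m : ℕ, θ ^ (m + 2) / ((m + 2).factorial : ℝ) := by
    rw [hexp, ← Summable.sum_add_tsum_nat_add 2 hsummable]
  have hhead : (∑ i ∈ Finset.range 2, θ ^ i / (i.factorial : ℝ)) = 1 + θ := by
    simp [Finset.sum_range_succ, Nat.factorial]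
  have hgeo : (0:ℝ) ≤ θ / 3 ∧ θ / 3 < 1 := ⟨by positivity, by linarith⟩
  have hsumgeo : Summable (fun m : ℕ => θ ^ 2 / 2 * (θ / 3) ^ m) :=
    (summable_geometric_of_lt_one hgeo.1 hgeo.2).mul_left _
  have hterm : ∀ m : ℕ, θ ^ (m + 2) / ((m + 2).factorial : ℝ)
      ≤ θ ^ 2 / 2 * (θ / 3) ^ m := by
    intro m
    have hfac : (2 * 3 ^ m : ℝ) ≤ ((m + 2).factorial : ℝ) := by
      exact_mod_cast two_mul_three_pow_le_factorial m
    have h1 : θ ^ (m + 2) / ((m + 2).factorial : ℝ) ≤ θ ^ (m + 2) / (2 * 3 ^ m) := by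
      gcongr
    refine le_trans h1 (le_of_eq ?_)
    rw [div_pow, pow_add]
    field_simp
  have htail : ∑' m : ℕ, θ ^ (m + 2) / ((m + 2).factorial : ℝ)
      ≤ θ ^ 2 / 2 * (1 - θ / 3)⁻¹ := by
    calc ∑' m : ℕ, θ ^ (m + 2) / ((m + 2).factorial : ℝ)
        ≤ ∑' m : ℕ, θ ^ 2 / 2 * (θ / 3) ^ m :=
          Summable.tsum_le_tsum hterm ((summable_nat_add_iff 2).mpr hsummable) hsumgeo
      _ = θ ^ 2 / 2 * (1 - θ / 3)⁻¹ := by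
          rw [tsum_mul_left, tsum_geometric_of_lt_one hgeo.1 hgeo.2]
  have hne : (1 - θ / 3) ≠ 0 := by
    have : 0 < 1 - θ / 3 := by linarith
    linarith
  have heq : θ ^ 2 / 2 * (1 - θ / 3)⁻¹ = θ ^ 2 / (2 * (1 - θ / 3)) := by
    field_simp
  rw [hsplit, hhead]
  rw [heq] at htail
  linarith


lemma esymm_le {k : ℕ} (p : Fin k → ℝ) (hp : ∀ j, 0 ≤ p j) (s : ℕ) :
    (s.factorial : ℝ) * ∑ I ∈ Finset.univ.powersetCard s, ∏ j ∈ I, p j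
      ≤ (∑ j, p j) ^ s := by
  induction s with
  | zero => simp
  | succ s ih =>
      have hlam : 0 ≤ ∑ j, p j := Finset.sum_nonneg fun j _ => hp j
      have hprod : ∀ J : Finset (Fin k), 0 ≤ ∏ i ∈ J, p i :=
        fun J => Finset.prod_nonneg fun i _ => hp i
      have key : ((s+1 : ℕ) : ℝ) * ∑ I ∈ Finset.univ.powersetCard (s+1), ∏ j ∈ I, p j
          ≤ (∑ j, p j) * ∑ I ∈ Finset.univ.powersetCard s, ∏ j ∈ I, p j := by
        calc ((s+1 : ℕ) : ℝ) * ∑ I ∈ Finset.univ.powersetCard (s+1), ∏ j ∈ I, p j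
            = ∑ I ∈ Finset.univ.powersetCard (s+1), ∑ _j ∈ I, ∏ i ∈ I, p i := by
              rw [Finset.mul_sum]
              apply Finset.sum_congr rfl
              intro I hI
              rw [Finset.sum_const, (Finset.mem_powersetCard.mp hI).2, nsmul_eq_mul]
          _ = ∑ x ∈ (Finset.univ.powersetCard (s+1)).sigma (fun I => I), ∏ i ∈ x.1, p i := by
              rw [Finset.sum_sigma]
          _ = ∑ x ∈ (Finset.univ.powersetCard s).sigma (fun J => Finset.univ \ J),
                p x.2 * ∏ i ∈ x.1, p i := by
              apply Finset.sum_nbij'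
                (i := fun x => (⟨x.1.erase x.2, x.2⟩ : Σ _J : Finset (Fin k), Fin k))
                (j := fun x => (⟨insert x.2 x.1, x.2⟩ : Σ _I : Finset (Fin k), Fin k))
              · rintro ⟨I, j⟩ hx
                rw [Finset.mem_sigma] at hx ⊢
                obtain ⟨hI, hjI⟩ := hx
                rw [Finset.mem_powersetCard] at hI
                refine ⟨Finset.mem_powersetCard.mpr ⟨Finset.subset_univ _, ?_⟩, ?_⟩
                · rw [Finset.card_erase_of_mem hjI, hI.2]; omega
                · simp [Finset.mem_sdiff]
              · rintro ⟨J, j⟩ hx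
                rw [Finset.mem_sigma] at hx ⊢
                obtain ⟨hJ, hjJ⟩ := hx
                rw [Finset.mem_powersetCard] at hJ
                rw [Finset.mem_sdiff] at hjJ
                refine ⟨Finset.mem_powersetCard.mpr ⟨Finset.subset_univ _, ?_⟩, ?_⟩
                · rw [Finset.card_insert_of_notMem hjJ.2, hJ.2]
                · exact Finset.mem_insert_self _ _
              · rintro ⟨I, j⟩ hx
                rw [Finset.mem_sigma] at hx
                simp [Finset.insert_erase hx.2]
              · rintro ⟨J, j⟩ hx
                rw [Finset.mem_sigma, Finset.mem_sdiff] at hx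
                simp [Finset.erase_insert hx.2.2]
              · rintro ⟨I, j⟩ hx
                rw [Finset.mem_sigma] at hx
                exact (Finset.mul_prod_erase I p hx.2).symm
          _ = ∑ J ∈ Finset.univ.powersetCard s, ∑ j ∈ Finset.univ \ J, p j * ∏ i ∈ J, p i := by
              rw [Finset.sum_sigma]
          _ ≤ ∑ J ∈ Finset.univ.powersetCard s, (∑ j, p j) * ∏ i ∈ J, p i := by
              apply Finset.sum_le_sum
              intro J _
              rw [← Finset.sum_mul]
              apply mul_le_mul_of_nonneg_right ?_ (hprod J)
              exact Finset.sum_le_sum_of_subset_of_nonneg (Finset.sdiff_subset)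
                (fun j _ _ => hp j)
          _ = (∑ j, p j) * ∑ I ∈ Finset.univ.powersetCard s, ∏ j ∈ I, p j := by
              rw [Finset.mul_sum]
      have h2 : ((s+1).factorial : ℝ) * ∑ I ∈ Finset.univ.powersetCard (s+1), ∏ j ∈ I, p j
          = (s.factorial : ℝ) * (((s+1 : ℕ) : ℝ) *
              ∑ I ∈ Finset.univ.powersetCard (s+1), ∏ j ∈ I, p j) := by
        rw [Nat.factorial_succ]
        push_cast
        ring
      rw [h2, pow_succ]
      calc (s.factorial : ℝ) * (((s+1 : ℕ) : ℝ) *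
              ∑ I ∈ Finset.univ.powersetCard (s+1), ∏ j ∈ I, p j)
          ≤ (s.factorial : ℝ) * ((∑ j, p j) *
              ∑ I ∈ Finset.univ.powersetCard s, ∏ j ∈ I, p j) := by
            apply mul_le_mul_of_nonneg_left key (by positivity)
        _ = ((s.factorial : ℝ) * ∑ I ∈ Finset.univ.powersetCard s, ∏ j ∈ I, p j)
              * (∑ j, p j) := by ring
        _ ≤ (∑ j, p j) ^ s * (∑ j, p j) := mul_le_mul_of_nonneg_right ih hlam


section glue

lemma Pr_iUnion_le {k : ℕ} (A : Fin k → Set (∀ i, Ω i)) :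
    Pr μi (⋃ j, A j) ≤ ∑ j, Pr μi (A j) := by
  unfold Pr
  rw [Finset.sum_comm]
  apply Finset.sum_le_sum
  intro ω _
  by_cases h : ω ∈ ⋃ j, A j
  · obtain ⟨j₀, hj₀⟩ := Set.mem_iUnion.mp h
    rw [Set.indicator_of_mem h]
    calc Wt μi ω = (A j₀).indicator (Wt μi) ω := (Set.indicator_of_mem hj₀ _).symm
      _ ≤ ∑ j, (A j).indicator (Wt μi) ω :=
          Finset.single_le_sum (fun j _ => Set.indicator_nonneg
            (fun σ _ => Wt_nonneg μi σ) ω) (Finset.mem_univ j₀)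
  · rw [Set.indicator_of_notMem h]
    exact Finset.sum_nonneg fun j _ => Set.indicator_nonneg (fun σ _ => Wt_nonneg μi σ) ω

lemma Pr_disOc {k : ℕ} (A : Fin k → Set (∀ i, Ω i)) (I : Finset (Fin k)) :
    Pr μi (DisOcSet A I) = ∑ ω : ∀ i, Ω i, Wt μi ω * (if OccurDisjointly A I ω then (1:ℝ) else 0) := by
  unfold Pr
  apply Finset.sum_congr rfl
  intro ω _
  by_cases h : OccurDisjointly A I ω
  · rw [Set.indicator_of_mem (show ω ∈ DisOcSet A I from h), if_pos h, mul_one]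
  · rw [Set.indicator_of_notMem (show ω ∉ DisOcSet A I from h), if_neg h, mul_zero]

/-- main Chernoff computation -/
theorem main {k : ℕ}
    (hPA : ∀ i, PositivelyAssociated (μi i))
    (A : Fin k → Set (∀ i, Ω i)) (hA : ∀ j, IsUpperSet (A j))
    (lam : ℝ) (hlam : lam = ∑ i, Pr μi (A i)) (t : ℝ) (ht : 0 ≤ t) :
    Pr μi {ω | lam + t ≤ (maxDisjOcc A ω : ℝ)} ≤
      Real.exp (-(t ^ 2 / (2 * (lam + t / 3)))) := by
  have hlam0 : 0 ≤ lam := hlam ▸ Finset.sum_nonneg fun i _ => Pr_nonneg μi (A i)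
  rcases eq_or_lt_of_le hlam0 with hlz | hlpos
  · -- lam = 0
    rcases eq_or_lt_of_le ht with htz | htpos
    · -- t = 0
      rw [← hlz, ← htz]
      norm_num
      exact Pr_le_one μi _
    · -- t > 0 : probability is 0
      have hsub : {ω | lam + t ≤ (maxDisjOcc A ω : ℝ)} ⊆ ⋃ j, A j := by
        intro ω hω
        simp only [Set.mem_setOf_eq] at hω
        have hX : 1 ≤ maxDisjOcc A ω := by
          rcases Nat.eq_zero_or_pos (maxDisjOcc A ω) with h0 | h1
          · exfalso
            rw [h0] at hω
            push_cast at hω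
            have hl0 : lam = 0 := hlz.symm
            linarith
          · exact h1
        obtain ⟨I, hI, hocc⟩ := maxDisjOcc_spec A ω
        have : I.Nonempty := Finset.card_pos.mp (by omega)
        obtain ⟨j, hj⟩ := this
        obtain ⟨S, _, hc⟩ := hocc
        exact Set.mem_iUnion.mpr ⟨j, hc j hj ω (fun _ _ => rfl)⟩
      have h0 : Pr μi {ω | lam + t ≤ (maxDisjOcc A ω : ℝ)} ≤ 0 := by
        calc Pr μi {ω | lam + t ≤ (maxDisjOcc A ω : ℝ)}
            ≤ Pr μi (⋃ j, A j) := Pr_mono μi hsub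
          _ ≤ ∑ j, Pr μi (A j) := Pr_iUnion_le μi A
          _ = lam := hlam.symm
          _ = 0 := hlz.symm
      exact le_trans h0 (le_of_lt (Real.exp_pos _))
  · -- lam > 0
    set θ : ℝ := t / (lam + t / 3) with hθ
    have hden : 0 < lam + t / 3 := by linarith
    have hθ0 : 0 ≤ θ := div_nonneg ht (le_of_lt hden)
    have hθ3 : θ < 3 := by
      rw [hθ, div_lt_iff₀ hden]
      linarith
    set c : ℝ := Real.exp θ - 1 with hc
    have hc0 : 0 ≤ c := by
      have := Real.one_le_exp hθ0
      simp [hc]; linarith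
    have hec : Real.exp θ = 1 + c := by rw [hc]; ring
    -- Markov
    have markov : Pr μi {ω | lam + t ≤ (maxDisjOcc A ω : ℝ)} * Real.exp (θ * (lam + t))
        ≤ ∑ ω : ∀ i, Ω i, Wt μi ω * Real.exp (θ * (maxDisjOcc A ω : ℝ)) := by
      unfold Pr
      rw [Finset.sum_mul]
      apply Finset.sum_le_sum
      intro ω _
      by_cases h : ω ∈ {ω | lam + t ≤ (maxDisjOcc A ω : ℝ)}
      · rw [Set.indicator_of_mem h]
        apply mul_le_mul_of_nonneg_left ?_ (Wt_nonneg μi ω)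
        exact Real.exp_le_exp.mpr (mul_le_mul_of_nonneg_left h hθ0)
      · rw [Set.indicator_of_notMem h, zero_mul]
        exact mul_nonneg (Wt_nonneg μi ω) (le_of_lt (Real.exp_pos _))
    -- binomial expansion
    have hexpand : ∀ ω : ∀ i, Ω i, Real.exp (θ * (maxDisjOcc A ω : ℝ))
        = ∑ s ∈ Finset.range (k+1), ((maxDisjOcc A ω).choose s : ℝ) * c ^ s := by
      intro ω
      set m := maxDisjOcc A ω with hm
      have h1 : Real.exp (θ * (m : ℝ)) = (1 + c) ^ m := by
        rw [mul_comm, ← hec, ← Real.exp_nat_mul, mul_comm]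
      rw [h1]
      have h2 : (1 + c) ^ m = ∑ s ∈ Finset.range (m+1), (m.choose s : ℝ) * c ^ s := by
        rw [add_comm 1 c, add_pow]
        apply Finset.sum_congr rfl
        intro s _
        rw [one_pow]
        ring
      rw [h2]
      apply Finset.sum_subset
      · exact Finset.range_subset_range.mpr (by have := maxDisjOcc_le A ω; omega)
      · intro s _ hs
        rw [Finset.mem_range, not_lt] at hs
        rw [Nat.choose_eq_zero_of_lt (by omega)]
        simp
    -- expectation bound
    have hmoment : ∀ s : ℕ, ∑ ω : ∀ i, Ω i, Wt μi ω * ((maxDisjOcc A ω).choose s : ℝ)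
        ≤ lam ^ s / s.factorial := by
      intro s
      have h1 : ∑ ω : ∀ i, Ω i, Wt μi ω * ((maxDisjOcc A ω).choose s : ℝ)
          ≤ ∑ I ∈ Finset.univ.powersetCard s, Pr μi (DisOcSet A I) := by
        calc ∑ ω : ∀ i, Ω i, Wt μi ω * ((maxDisjOcc A ω).choose s : ℝ)
            ≤ ∑ ω : ∀ i, Ω i, Wt μi ω * ∑ I ∈ Finset.univ.powersetCard s,
                (if OccurDisjointly A I ω then (1:ℝ) else 0) := by
              apply Finset.sum_le_sum
              intro ω _
              exact mul_le_mul_of_nonneg_left (choose_le_sum A ω s) (Wt_nonneg μi ω)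
          _ = ∑ I ∈ Finset.univ.powersetCard s, ∑ ω : ∀ i, Ω i,
                Wt μi ω * (if OccurDisjointly A I ω then (1:ℝ) else 0) := by
              simp only [Finset.mul_sum]
              rw [Finset.sum_comm]
          _ = ∑ I ∈ Finset.univ.powersetCard s, Pr μi (DisOcSet A I) := by
              exact Finset.sum_congr rfl fun I _ => (Pr_disOc μi A I).symm
      have h2 : ∑ I ∈ Finset.univ.powersetCard s, Pr μi (DisOcSet A I)
          ≤ ∑ I ∈ Finset.univ.powersetCard s, ∏ j ∈ I, Pr μi (A j) :=
        Finset.sum_le_sum fun I _ => bkI μi hA hPA I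
      have h3 : (s.factorial : ℝ) * ∑ I ∈ Finset.univ.powersetCard s, ∏ j ∈ I, Pr μi (A j)
          ≤ lam ^ s := by
        rw [hlam]
        exact esymm_le (fun j => Pr μi (A j)) (fun j => Pr_nonneg μi (A j)) s
      have hfac : (0:ℝ) < (s.factorial : ℝ) := by positivity
      rw [le_div_iff₀ hfac]
      calc (∑ ω : ∀ i, Ω i, Wt μi ω * ((maxDisjOcc A ω).choose s : ℝ)) * (s.factorial : ℝ)
          ≤ (∑ I ∈ Finset.univ.powersetCard s, ∏ j ∈ I, Pr μi (A j)) * (s.factorial : ℝ) := by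
            apply mul_le_mul_of_nonneg_right (le_trans h1 h2) (le_of_lt hfac)
        _ ≤ lam ^ s := by rw [mul_comm]; exact h3
    -- mgf bound
    have hmgf : ∑ ω : ∀ i, Ω i, Wt μi ω * Real.exp (θ * (maxDisjOcc A ω : ℝ))
        ≤ Real.exp (c * lam) := by
      calc ∑ ω : ∀ i, Ω i, Wt μi ω * Real.exp (θ * (maxDisjOcc A ω : ℝ))
          = ∑ s ∈ Finset.range (k+1), c ^ s *
              ∑ ω : ∀ i, Ω i, Wt μi ω * ((maxDisjOcc A ω).choose s : ℝ) := by
            simp only [hexpand, Finset.mul_sum]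
            rw [Finset.sum_comm]
            apply Finset.sum_congr rfl
            intro s _
            apply Finset.sum_congr rfl
            intro ω _
            ring
        _ ≤ ∑ s ∈ Finset.range (k+1), c ^ s * (lam ^ s / s.factorial) := by
            apply Finset.sum_le_sum
            intro s _
            exact mul_le_mul_of_nonneg_left (hmoment s) (by positivity)
        _ = ∑ s ∈ Finset.range (k+1), (c * lam) ^ s / s.factorial := by
            apply Finset.sum_congr rfl
            intro s _
            rw [mul_pow]
            ring
        _ ≤ Real.exp (c * lam) := Real.sum_le_exp_of_nonneg (by positivity) _
    -- combine
    have hcomb : Pr μi {ω | lam + t ≤ (maxDisjOcc A ω : ℝ)}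
        ≤ Real.exp (c * lam - θ * (lam + t)) := by
      have hpos : 0 < Real.exp (θ * (lam + t)) := Real.exp_pos _
      rw [Real.exp_sub]
      rw [le_div_iff₀ hpos]
      exact le_trans markov hmgf
    refine le_trans hcomb (Real.exp_le_exp.mpr ?_)
    -- final algebra
    have hcle : c ≤ θ + θ ^ 2 / (2 * (1 - θ / 3)) := by
      have := exp_upper hθ0 hθ3
      rw [hc]; linarith
    have h1mθ : 1 - θ / 3 = lam / (lam + t / 3) := by
      rw [hθ]
      field_simp
      ring
    have hkey : lam * (θ + θ ^ 2 / (2 * (1 - θ / 3))) - θ * (lam + t)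
        = -(t ^ 2 / (2 * (lam + t / 3))) := by
      rw [h1mθ, hθ]
      have hlne : lam ≠ 0 := ne_of_gt hlpos
      have hdne : lam + t / 3 ≠ 0 := ne_of_gt hden
      field_simp
      ring
    calc c * lam - θ * (lam + t)
        ≤ (θ + θ ^ 2 / (2 * (1 - θ / 3))) * lam - θ * (lam + t) := by
          apply sub_le_sub_right
          exact mul_le_mul_of_nonneg_right hcle hlam0
      _ = lam * (θ + θ ^ 2 / (2 * (1 - θ / 3))) - θ * (lam + t) := by ring
      _ = -(t ^ 2 / (2 * (lam + t / 3))) := hkey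


end glue
end step
end BKaux

/-- **Chernoff-type upper tail bound for disjoint occurrence of increasing events.**
In a finite product probability space with positively associated factors, if
`A 1, …, A k` are increasing events, `X` is the maximal number of them occurring
disjointly, and `λ = Σ μ(A i)`, then for `t ≥ 0`,
`Pr(X ≥ λ + t) ≤ exp(−t²/(2(λ + t/3)))`. -/
theorem extended_BK_bernstein
    {n k : ℕ} {Ω : Fin n → Type*}
    [∀ i, Fintype (Ω i)] [∀ i, PartialOrder (Ω i)]
    [∀ i, MeasurableSpace (Ω i)] [∀ i, MeasurableSingletonClass (Ω i)]
    (μi : ∀ i, Measure (Ω i)) [∀ i, IsProbabilityMeasure (μi i)]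
    (hPA : ∀ i, PositivelyAssociated (μi i))
    (A : Fin k → Set (∀ i, Ω i))
    (hA : ∀ j, IsUpperSet (A j))
    (lam : ℝ) (hlam : lam = ∑ i, (Measure.pi μi (A i)).toReal) :
    ∀ t : ℝ, 0 ≤ t →
      (Measure.pi μi {ω | lam + t ≤ (maxDisjOcc A ω : ℝ)}).toReal ≤
        Real.exp (-(t ^ 2 / (2 * (lam + t / 3)))) := by
  intro t ht
  have h1 : lam = ∑ i, BKaux.Pr μi (A i) := by
    rw [hlam]
    exact Finset.sum_congr rfl fun i _ => BKaux.Pr_eq_measure μi (A i)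
  rw [BKaux.Pr_eq_measure μi]
  exact BKaux.main μi hPA A hA lam h1 t ht
end

section
/- Let A_1,…,A_k be events in a probability space, let λ = Σ_{i=1}^k Pr(A_i), and define Z(ω) = max{|I| : I ⊆ [k], the events {A_i}_{i∈I} are mutually independent, and ω ∈ ∩_{i∈I} A_i}. Then for every t ≥ 0, Pr(Z ≥ λ + t) ≤ exp(−λ φ(t/λ)), where φ(x) = (1+x)log(1+x) − x. -/
open MeasureTheory ProbabilityTheory

/-- The Chernoff rate function `φ(x) = (1+x) log (1+x) − x`. -/
noncomputable def chernoffPhi (x : ℝ) : ℝ := (1 + x) * Real.log (1 + x) - x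

/-- The events `A i`, `i ∈ I`, are mutually independent:
for every `J ⊆ I`, `μ(⋂_{i ∈ J} A i) = ∏_{i ∈ J} μ(A i)`. -/
def MutuallyIndepEvents {Ω ι : Type*} [MeasurableSpace Ω] (μ : Measure Ω)
    (A : ι → Set Ω) (I : Finset ι) : Prop :=
  ∀ J ⊆ I, μ (⋂ i ∈ J, A i) = ∏ i ∈ J, μ (A i)

/-- `Z ω` is the maximum size of a set `I ⊆ [k]` such that the events
`A i`, `i ∈ I`, are mutually independent and all occur at `ω`. -/
noncomputable def maxIndepOcc {Ω : Type*} [MeasurableSpace Ω] (μ : Measure Ω)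
    {k : ℕ} (A : Fin k → Set Ω) (ω : Ω) : ℕ :=
  sSup {m : ℕ | ∃ I : Finset (Fin k), I.card = m ∧
    MutuallyIndepEvents μ A I ∧ ∀ i ∈ I, ω ∈ A i}

/-- **Janson's upper tail lemma.** For events `A 1, …, A k` in a probability space,
with `λ = Σ Pr(A i)` and `Z` the maximal number of mutually independent events among
them that occur, `Pr(Z ≥ λ + t) ≤ exp(−λ φ(t/λ))` for every `t ≥ 0`. -/
theorem janson_upper_tail
    {Ω : Type*} [MeasurableSpace Ω] (μ : Measure Ω) [IsProbabilityMeasure μ]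
    {k : ℕ} (A : Fin k → Set Ω)
    (lam : ℝ) (hlam : lam = ∑ i, (μ (A i)).toReal) :
    ∀ t : ℝ, 0 ≤ t →
      (μ {ω | lam + t ≤ (maxIndepOcc μ A ω : ℝ)}).toReal ≤
        Real.exp (-(lam * chernoffPhi (t / lam))) := by
  classical
  intro t ht
  have hlam0 : 0 ≤ lam := by
    rw [hlam]; exact Finset.sum_nonneg fun i _ => ENNReal.toReal_nonneg
  rcases eq_or_lt_of_le hlam0 with h0 | hpos
  · -- degenerate case lam = 0
    rw [← h0]
    simp only [zero_mul, neg_zero, Real.exp_zero]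
    exact ENNReal.toReal_le_of_le_ofReal one_pos.le (by simpa using prob_le_one)
  -- main case
  set u : ℝ := t / lam with hu_def
  have hu : 0 ≤ u := div_nonneg ht hlam0
  have h1u : (0:ℝ) < 1 + u := by linarith
  have hul : lam * u = t := by
    rw [hu_def, mul_div_cancel₀ _ hpos.ne']
  set c : ℝ := (1 + u) ^ (lam + t) with hc_def
  have hc : 0 < c := Real.rpow_pos_of_pos h1u _
  set 𝓘 : Finset (Finset (Fin k)) :=
    Finset.univ.filter (fun I => MutuallyIndepEvents μ A I) with h𝓘
  set Bh : Finset (Fin k) → Set Ω := fun I => toMeasurable μ (⋂ i ∈ I, A i) with hBh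
  set g : Ω → ENNReal :=
    fun ω => ∑ I ∈ 𝓘, ENNReal.ofReal (u ^ I.card) * (Bh I).indicator 1 ω with hg
  -- pointwise lower bound on g on the tail event
  have hpoint : ∀ ω, lam + t ≤ (maxIndepOcc μ A ω : ℝ) → ENNReal.ofReal c ≤ g ω := by
    intro ω hω
    obtain ⟨I₀, hcard, hindep, hocc⟩ :
        ∃ I : Finset (Fin k), I.card = maxIndepOcc μ A ω ∧
          MutuallyIndepEvents μ A I ∧ ∀ i ∈ I, ω ∈ A i := by
      have hne : {m : ℕ | ∃ I : Finset (Fin k), I.card = m ∧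
          MutuallyIndepEvents μ A I ∧ ∀ i ∈ I, ω ∈ A i}.Nonempty := by
        refine ⟨0, ∅, by simp, ?_, by simp⟩
        intro J hJ
        rw [Finset.subset_empty.mp hJ]
        simp
      have hbdd : BddAbove {m : ℕ | ∃ I : Finset (Fin k), I.card = m ∧
          MutuallyIndepEvents μ A I ∧ ∀ i ∈ I, ω ∈ A i} := by
        refine ⟨k, fun m hm => ?_⟩
        obtain ⟨I, hI, -⟩ := hm
        rw [← hI]
        exact (Finset.card_le_univ I).trans_eq (Fintype.card_fin k)
      exact Nat.sSup_mem hne hbdd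
    calc ENNReal.ofReal c ≤ ENNReal.ofReal ((1 + u) ^ I₀.card : ℝ) := by
          apply ENNReal.ofReal_le_ofReal
          rw [hc_def, show ((1+u) ^ I₀.card : ℝ) = (1+u) ^ (I₀.card : ℝ) from
            (Real.rpow_natCast _ _).symm]
          exact Real.rpow_le_rpow_of_exponent_le (by linarith) (by rw [hcard]; exact hω)
      _ = ∑ I ∈ I₀.powerset, ENNReal.ofReal (u ^ I.card) := by
          rw [← ENNReal.ofReal_sum_of_nonneg (fun I _ => pow_nonneg hu _)]
          congr 1
          have h := Finset.prod_add (fun _ : Fin k => u) (fun _ : Fin k => (1:ℝ)) I₀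
          simp only [Finset.prod_const, Finset.prod_const_one, mul_one] at h
          rw [add_comm] at h
          simpa using h
      _ ≤ ∑ I ∈ I₀.powerset, ENNReal.ofReal (u ^ I.card) * (Bh I).indicator 1 ω := by
          apply Finset.sum_le_sum
          intro I hI
          have hωB : ω ∈ Bh I := subset_toMeasurable _ _
            (Set.mem_iInter₂.mpr fun i hi => hocc i (Finset.mem_powerset.mp hI hi))
          rw [Set.indicator_of_mem hωB]
          simp
      _ ≤ g ω := by
          apply Finset.sum_le_sum_of_subset
          intro I hI
          rw [h𝓘, Finset.mem_filter]
          exact ⟨Finset.mem_univ _,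
            fun J hJ => hindep J (hJ.trans (Finset.mem_powerset.mp hI))⟩
  -- measurability of g
  have hmeas : Measurable g := by
    apply Finset.measurable_sum
    intro I _
    exact ((measurable_const.indicator (measurableSet_toMeasurable μ _)).const_mul _)
  -- integral bound
  have hint : ∫⁻ ω, g ω ∂μ ≤ ENNReal.ofReal (Real.exp (u * lam)) := by
    rw [show ∫⁻ ω, g ω ∂μ
        = ∑ I ∈ 𝓘, ∫⁻ ω, ENNReal.ofReal (u ^ I.card) * (Bh I).indicator 1 ω ∂μ from
      lintegral_finset_sum _ (fun I _ =>
        (measurable_const.indicator (measurableSet_toMeasurable μ _)).const_mul _)]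
    have step1 : ∀ I ∈ 𝓘,
        ∫⁻ ω, ENNReal.ofReal (u ^ I.card) * (Bh I).indicator 1 ω ∂μ
          = ENNReal.ofReal (u ^ I.card) * ∏ i ∈ I, μ (A i) := by
      intro I hI
      rw [lintegral_const_mul _ ((measurable_one : Measurable (1 : Ω → ENNReal)).indicator
        (measurableSet_toMeasurable μ _)),
        lintegral_indicator_one (measurableSet_toMeasurable μ _), measure_toMeasurable]
      congr 1
      exact (Finset.mem_filter.mp hI).2 I le_rfl
    rw [Finset.sum_congr rfl step1]
    calc ∑ I ∈ 𝓘, ENNReal.ofReal (u ^ I.card) * ∏ i ∈ I, μ (A i)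
        ≤ ∑ I ∈ (Finset.univ : Finset (Fin k)).powerset,
            ENNReal.ofReal (u ^ I.card) * ∏ i ∈ I, μ (A i) := by
          apply Finset.sum_le_sum_of_subset
          intro I _
          exact Finset.mem_powerset.mpr (Finset.subset_univ I)
      _ = ∏ i : Fin k, (ENNReal.ofReal u * μ (A i) + 1) := by
          rw [Finset.prod_add]
          apply Finset.sum_congr rfl
          intro I _
          rw [Finset.prod_mul_distrib, Finset.prod_const, Finset.prod_const_one, mul_one,
            ENNReal.ofReal_pow hu]
      _ ≤ ∏ i : Fin k, ENNReal.ofReal (Real.exp (u * (μ (A i)).toReal)) := by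
          apply Finset.prod_le_prod'
          intro i _
          calc ENNReal.ofReal u * μ (A i) + 1
              = ENNReal.ofReal (u * (μ (A i)).toReal + 1) := by
                rw [ENNReal.ofReal_add (mul_nonneg hu ENNReal.toReal_nonneg) zero_le_one,
                  ENNReal.ofReal_mul hu, ENNReal.ofReal_toReal (measure_ne_top μ _),
                  ENNReal.ofReal_one]
            _ ≤ _ := ENNReal.ofReal_le_ofReal (Real.add_one_le_exp _)
      _ = ENNReal.ofReal (Real.exp (u * lam)) := by
          rw [← ENNReal.ofReal_prod_of_nonneg (fun i _ => (Real.exp_pos _).le)]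
          congr 1
          rw [← Real.exp_sum, hlam, Finset.mul_sum]
  -- Markov
  have hmark : μ {ω | lam + t ≤ (maxIndepOcc μ A ω : ℝ)}
      ≤ ENNReal.ofReal (Real.exp (u * lam)) / ENNReal.ofReal c := by
    rw [ENNReal.le_div_iff_mul_le (Or.inl (ENNReal.ofReal_pos.mpr hc).ne')
      (Or.inl ENNReal.ofReal_ne_top)]
    calc μ {ω | lam + t ≤ (maxIndepOcc μ A ω : ℝ)} * ENNReal.ofReal c
        = ENNReal.ofReal c * μ {ω | lam + t ≤ (maxIndepOcc μ A ω : ℝ)} := mul_comm _ _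
      _ ≤ ENNReal.ofReal c * μ {ω | ENNReal.ofReal c ≤ g ω} := by
          gcongr
          intro hω
          exact hpoint _ hω
      _ ≤ ∫⁻ ω, g ω ∂μ := mul_meas_ge_le_lintegral₀ hmeas.aemeasurable _
      _ ≤ ENNReal.ofReal (Real.exp (u * lam)) := hint
  -- conclude
  have hfinal : μ {ω | lam + t ≤ (maxIndepOcc μ A ω : ℝ)}
      ≤ ENNReal.ofReal (Real.exp (u * lam) / c) := by
    rw [ENNReal.ofReal_div_of_pos hc]; exact hmark
  have hceq : Real.exp (u * lam) / c = Real.exp (-(lam * chernoffPhi (t / lam))) := by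
    rw [hc_def, Real.rpow_def_of_pos h1u, ← Real.exp_sub]
    congr 1
    rw [← hu_def]
    unfold chernoffPhi
    linear_combination Real.log (1 + u) * hul
  rw [← hceq]
  exact ENNReal.toReal_le_of_le_ofReal (div_nonneg (Real.exp_pos _).le hc.le) hfinal
end

section
/- Let Ω = {0,1}^n be equipped with a product probability measure μ = ∏_{i=1}^n μ_i (each μ_i a probability measure on {0,1}), and let A, B ⊆ Ω be increasing events. Then μ(A □ B) ≤ μ(A) μ(B). -/
open MeasureTheory

/-- `A □ B`: the set of `ω ∈ {0,1}ⁿ` at which `A` and `B` occur disjointly, i.e.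
there are disjoint `S, T ⊆ [n]` such that every `ω'` agreeing with `ω` on `S`
lies in `A` and every `ω'` agreeing with `ω` on `T` lies in `B`. -/
def boxEvent {n : ℕ} (A B : Set (Fin n → Bool)) : Set (Fin n → Bool) :=
  {ω | ∃ S T : Finset (Fin n), Disjoint S T ∧
    (∀ ω' : Fin n → Bool, (∀ i ∈ S, ω' i = ω i) → ω' ∈ A) ∧
    (∀ ω' : Fin n → Bool, (∀ i ∈ T, ω' i = ω i) → ω' ∈ B)}

def sect {n : ℕ} (c : Bool) (X : Set (Fin (n + 1) → Bool)) : Set (Fin n → Bool) :=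
  {ω | Fin.cons c ω ∈ X}

lemma boxEvent_mono {n : ℕ} {A A' B B' : Set (Fin n → Bool)} (hA : A ⊆ A') (hB : B ⊆ B') :
    boxEvent A B ⊆ boxEvent A' B' := by
  rintro ω ⟨S, T, hST, h1, h2⟩
  exact ⟨S, T, hST, fun ω' h => hA (h1 ω' h), fun ω' h => hB (h2 ω' h)⟩

/-- helper: a witness set `S` for `A` at `Fin.cons c ω` yields a witness `S.preimage Fin.succ`
for `sect c' A` at `ω`, provided `c = c'` or `0 ∉ S`. -/
lemma certify_helper {n : ℕ} {A : Set (Fin (n + 1) → Bool)} {S : Finset (Fin (n + 1))}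
    {c c' : Bool} {ω : Fin n → Bool}
    (hc : c = c' ∨ (0 : Fin (n + 1)) ∉ S)
    (h : ∀ ω' : Fin (n + 1) → Bool, (∀ i ∈ S, ω' i = (Fin.cons c ω : Fin (n + 1) → Bool) i) → ω' ∈ A) :
    ∀ ω'' : Fin n → Bool,
      (∀ j ∈ S.preimage Fin.succ (Fin.succ_injective n).injOn, ω'' j = ω j) →
      ω'' ∈ sect c' A := by
  intro ω'' hagree
  apply h
  intro i hi
  rcases Fin.eq_zero_or_eq_succ i with rfl | ⟨j, rfl⟩
  · rcases hc with rfl | h0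
    · simp
    · exact absurd hi h0
  · simp only [Fin.cons_succ]
    exact hagree j (by simpa using hi)

lemma cons_preimage_box {n : ℕ} (A B : Set (Fin (n + 1) → Bool)) (c : Bool) :
    sect c (boxEvent A B) ⊆ boxEvent (sect c A) (sect c B) := by
  rintro ω ⟨S, T, hST, h1, h2⟩
  refine ⟨S.preimage Fin.succ (Fin.succ_injective n).injOn,
    T.preimage Fin.succ (Fin.succ_injective n).injOn, ?_,
    certify_helper (Or.inl rfl) h1, certify_helper (Or.inl rfl) h2⟩
  rw [Finset.disjoint_left]
  intro j hj hj'
  exact (Finset.disjoint_left.1 hST) (by simpa using hj) (by simpa using hj')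

lemma cons_true_preimage_box {n : ℕ} (A B : Set (Fin (n + 1) → Bool)) :
    sect true (boxEvent A B) ⊆
      boxEvent (sect false A) (sect true B) ∪
      boxEvent (sect true A) (sect false B) := by
  rintro ω ⟨S, T, hST, h1, h2⟩
  have hdisj : Disjoint (S.preimage Fin.succ (Fin.succ_injective n).injOn)
      (T.preimage Fin.succ (Fin.succ_injective n).injOn) := by
    rw [Finset.disjoint_left]
    intro j hj hj'
    exact (Finset.disjoint_left.1 hST) (by simpa using hj) (by simpa using hj')
  by_cases h0 : (0 : Fin (n + 1)) ∈ S
  · right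
    exact ⟨_, _, hdisj, certify_helper (Or.inl rfl) h1,
      certify_helper (Or.inr (Finset.disjoint_left.1 hST h0)) h2⟩
  · left
    exact ⟨_, _, hdisj, certify_helper (Or.inr h0) h1,
      certify_helper (Or.inl rfl) h2⟩
lemma sect_upper {n : ℕ} {A : Set (Fin (n + 1) → Bool)} (hA : IsUpperSet A) (c : Bool) :
    IsUpperSet (sect c A) := by
  intro ω ω' hle hmem
  refine hA (fun i => ?_) hmem
  rcases Fin.eq_zero_or_eq_succ i with rfl | ⟨j, rfl⟩
  · simp
  · simpa using hle j

lemma sect_false_subset {n : ℕ} {A : Set (Fin (n + 1) → Bool)} (hA : IsUpperSet A) :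
    sect false A ⊆ sect true A := by
  intro ω hmem
  refine hA (fun i => ?_) hmem
  rcases Fin.eq_zero_or_eq_succ i with rfl | ⟨j, rfl⟩
  · simp
  · simp

lemma pi_decomp {n : ℕ} (μi : Fin (n + 1) → Measure Bool) [∀ i, IsProbabilityMeasure (μi i)]
    (X : Set (Fin (n + 1) → Bool)) :
    Measure.pi μi X =
      μi 0 {true} * Measure.pi (fun j => μi ((0 : Fin (n + 1)).succAbove j)) (sect true X)
        + μi 0 {false} * Measure.pi (fun j => μi ((0 : Fin (n + 1)).succAbove j)) (sect false X) := by
  have hmp := (measurePreserving_piFinSuccAbove μi 0).symm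
  set ν := Measure.pi fun j => μi ((0 : Fin (n + 1)).succAbove j)
  set e := (MeasurableEquiv.piFinSuccAbove (fun _ : Fin (n + 1) => Bool) 0).symm
  have hXm : MeasurableSet X := X.to_countable.measurableSet
  have key : Measure.pi μi X = ((μi 0).prod ν) (e ⁻¹' X) := (hmp.measure_preimage hXm.nullMeasurableSet).symm
  rw [key, Measure.prod_apply ((e ⁻¹' X).to_countable.measurableSet)]
  rw [lintegral_fintype]
  have hsec : ∀ c : Bool, Prod.mk c ⁻¹' (e ⁻¹' X) = sect c X := by
    intro c
    ext ω
    simp only [Set.mem_preimage, sect, Set.mem_setOf_eq, e,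
      MeasurableEquiv.piFinSuccAbove_symm_apply]
    rw [show (Fin.insertNthEquiv (fun _ : Fin (n+1) => Bool) 0) (c, ω) = Fin.insertNth 0 c ω from rfl]
    rw [Fin.insertNth_zero]
    rfl
  rw [Fintype.sum_bool, hsec true, hsec false, mul_comm, mul_comm (ν (sect false X))]
theorem BK_aux : ∀ (n : ℕ) (μi : Fin n → Measure Bool), (∀ i, IsProbabilityMeasure (μi i)) →
    ∀ A B : Set (Fin n → Bool), IsUpperSet A → IsUpperSet B →
    Measure.pi μi (boxEvent A B) ≤ Measure.pi μi A * Measure.pi μi B := by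
  intro n
  induction n with
  | zero =>
    intro μi hμ A B _ _
    haveI := hμ
    by_cases hbox : boxEvent A B = ∅
    · simp [hbox]
    · obtain ⟨ω, S, T, -, h1, h2⟩ := Set.nonempty_iff_ne_empty.2 hbox
      have hAuniv : A = Set.univ := Set.eq_univ_of_forall fun ω' => h1 ω' (fun i _ => i.elim0)
      have hBuniv : B = Set.univ := Set.eq_univ_of_forall fun ω' => h2 ω' (fun i _ => i.elim0)
      rw [hAuniv, hBuniv, measure_univ, mul_one]
      exact prob_le_one
  | succ n ih =>
    intro μi hμ A B hA hB
    haveI := hμ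
    set ν := Measure.pi fun j => μi ((0 : Fin (n + 1)).succAbove j) with hνdef
    haveI : IsProbabilityMeasure ν := by
      haveI : ∀ j, IsProbabilityMeasure (μi ((0 : Fin (n + 1)).succAbove j)) := fun j => hμ _
      exact MeasureTheory.Measure.pi.instIsProbabilityMeasure _
    set p := μi 0 {true} with hpdef
    set q := μi 0 {false} with hqdef
    have hpq : p + q = 1 := by
      have huniv : ({true} : Set Bool) ∪ {false} = Set.univ := by
        ext b; cases b <;> simp
      rw [hpdef, hqdef, ← measure_union (by simp) (measurableSet_singleton _), huniv,
        measure_univ]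
    -- the four restricted boxes
    set At := sect true A
    set Af := sect false A
    set Bt := sect true B
    set Bf := sect false B
    have ihw : ν (boxEvent At Bt) ≤ ν At * ν Bt :=
      ih _ (fun j => hμ _) At Bt (sect_upper hA true) (sect_upper hB true)
    have ihy : ν (boxEvent Af Bt) ≤ ν Af * ν Bt :=
      ih _ (fun j => hμ _) Af Bt (sect_upper hA false) (sect_upper hB true)
    have ihz : ν (boxEvent At Bf) ≤ ν At * ν Bf :=
      ih _ (fun j => hμ _) At Bf (sect_upper hA true) (sect_upper hB false)
    have ihx : ν (boxEvent Af Bf) ≤ ν Af * ν Bf :=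
      ih _ (fun j => hμ _) Af Bf (sect_upper hA false) (sect_upper hB false)
    have hu_w : ν (sect true (boxEvent A B)) ≤ ν (boxEvent At Bt) :=
      measure_mono (cons_preimage_box A B true)
    have hv_x : ν (sect false (boxEvent A B)) ≤ ν (boxEvent Af Bf) :=
      measure_mono (cons_preimage_box A B false)
    have hsum : ν (sect true (boxEvent A B)) + ν (boxEvent Af Bf) ≤
        ν (boxEvent Af Bt) + ν (boxEvent At Bf) := by
      have h1 : ν (sect true (boxEvent A B)) ≤ ν (boxEvent Af Bt ∪ boxEvent At Bf) :=
        measure_mono (cons_true_preimage_box A B)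
      have h2 : ν (boxEvent Af Bf) ≤ ν (boxEvent Af Bt ∩ boxEvent At Bf) :=
        measure_mono (Set.subset_inter
          (boxEvent_mono subset_rfl (sect_false_subset hB))
          (boxEvent_mono (sect_false_subset hA) subset_rfl))
      calc ν (sect true (boxEvent A B)) + ν (boxEvent Af Bf)
          ≤ ν (boxEvent Af Bt ∪ boxEvent At Bf) + ν (boxEvent Af Bt ∩ boxEvent At Bf) :=
            add_le_add h1 h2
        _ = ν (boxEvent Af Bt) + ν (boxEvent At Bf) :=
            measure_union_add_inter _ ((boxEvent At Bf).to_countable.measurableSet)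
    rw [pi_decomp μi (boxEvent A B), pi_decomp μi A, pi_decomp μi B]
    -- pass to real numbers
    set u := ν (sect true (boxEvent A B))
    set v := ν (sect false (boxEvent A B))
    set w := ν (boxEvent At Bt)
    set y := ν (boxEvent Af Bt)
    set z := ν (boxEvent At Bf)
    set x := ν (boxEvent Af Bf)
    have fin : ∀ s : Set (Fin n → Bool), ν s ≠ ⊤ := fun s => measure_ne_top ν s
    have finp : p ≠ ⊤ := measure_ne_top _ _
    have finq : q ≠ ⊤ := measure_ne_top _ _
    have hL : p * u + q * v ≠ ⊤ :=
      ENNReal.add_ne_top.2 ⟨ENNReal.mul_ne_top finp (fin _), ENNReal.mul_ne_top finq (fin _)⟩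
    have hR : (p * ν At + q * ν Af) * (p * ν Bt + q * ν Bf) ≠ ⊤ :=
      ENNReal.mul_ne_top
        (ENNReal.add_ne_top.2 ⟨ENNReal.mul_ne_top finp (fin _), ENNReal.mul_ne_top finq (fin _)⟩)
        (ENNReal.add_ne_top.2 ⟨ENNReal.mul_ne_top finp (fin _), ENNReal.mul_ne_top finq (fin _)⟩)
    rw [← ENNReal.toReal_le_toReal hL hR]
    rw [ENNReal.toReal_add (ENNReal.mul_ne_top finp (fin _)) (ENNReal.mul_ne_top finq (fin _)),
      ENNReal.toReal_mul, ENNReal.toReal_mul, ENNReal.toReal_mul,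
      ENNReal.toReal_add (ENNReal.mul_ne_top finp (fin _)) (ENNReal.mul_ne_top finq (fin _)),
      ENNReal.toReal_add (ENNReal.mul_ne_top finp (fin _)) (ENNReal.mul_ne_top finq (fin _)),
      ENNReal.toReal_mul, ENNReal.toReal_mul, ENNReal.toReal_mul, ENNReal.toReal_mul]
    set p' := p.toReal
    set q' := q.toReal
    set u' := u.toReal
    set v' := v.toReal
    set w' := w.toReal
    set x' := x.toReal
    set y' := y.toReal
    set z' := z.toReal
    set ta' := (ν At).toReal
    set af' := (ν Af).toReal
    set bt' := (ν Bt).toReal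
    set bf' := (ν Bf).toReal
    have hpq' : p' + q' = 1 := by
      rw [← ENNReal.toReal_add finp finq, hpq, ENNReal.toReal_one]
    have htR : ∀ {a b : ENNReal}, a ≤ b → b ≠ ⊤ → a.toReal ≤ b.toReal := fun h hb =>
      ENNReal.toReal_mono hb h
    have ihw' : w' ≤ ta' * bt' := by
      rw [← ENNReal.toReal_mul]; exact htR ihw (ENNReal.mul_ne_top (fin _) (fin _))
    have ihy' : y' ≤ af' * bt' := by
      rw [← ENNReal.toReal_mul]; exact htR ihy (ENNReal.mul_ne_top (fin _) (fin _))
    have ihz' : z' ≤ ta' * bf' := by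
      rw [← ENNReal.toReal_mul]; exact htR ihz (ENNReal.mul_ne_top (fin _) (fin _))
    have ihx' : x' ≤ af' * bf' := by
      rw [← ENNReal.toReal_mul]; exact htR ihx (ENNReal.mul_ne_top (fin _) (fin _))
    have hu_w' : u' ≤ w' := htR hu_w (fin _)
    have hv_x' : v' ≤ x' := htR hv_x (fin _)
    have hsum' : u' + x' ≤ y' + z' := by
      rw [← ENNReal.toReal_add (fin _) (fin _), ← ENNReal.toReal_add (fin _) (fin _)]
      exact htR hsum (ENNReal.add_ne_top.2 ⟨fin _, fin _⟩)
    have hp0 : 0 ≤ p' := ENNReal.toReal_nonneg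
    have hq0 : 0 ≤ q' := ENNReal.toReal_nonneg
    have hu0 : 0 ≤ u' := ENNReal.toReal_nonneg
    have hv0 : 0 ≤ v' := ENNReal.toReal_nonneg
    have hx0 : 0 ≤ x' := ENNReal.toReal_nonneg
    have i1 : p' * u' = p' * p' * u' + p' * q' * u' := by
      linear_combination (p' * u') * hpq'.symm
    have i2 : q' * x' = q' * q' * x' + p' * q' * x' := by
      linear_combination (q' * x') * hpq'.symm
    have i3 : (p' * ta' + q' * af') * (p' * bt' + q' * bf') =
        p' * p' * (ta' * bt') + p' * q' * (af' * bt') + p' * q' * (ta' * bf')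
          + q' * q' * (af' * bf') := by ring
    have m1 : p' * p' * u' ≤ p' * p' * w' :=
      mul_le_mul_of_nonneg_left hu_w' (mul_nonneg hp0 hp0)
    have m2 : p' * q' * (u' + x') ≤ p' * q' * (y' + z') :=
      mul_le_mul_of_nonneg_left hsum' (mul_nonneg hp0 hq0)
    have m3 : q' * v' ≤ q' * x' := mul_le_mul_of_nonneg_left hv_x' hq0
    have m4 : p' * p' * w' ≤ p' * p' * (ta' * bt') :=
      mul_le_mul_of_nonneg_left ihw' (mul_nonneg hp0 hp0)
    have m5 : p' * q' * y' ≤ p' * q' * (af' * bt') :=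
      mul_le_mul_of_nonneg_left ihy' (mul_nonneg hp0 hq0)
    have m6 : p' * q' * z' ≤ p' * q' * (ta' * bf') :=
      mul_le_mul_of_nonneg_left ihz' (mul_nonneg hp0 hq0)
    have m7 : q' * q' * x' ≤ q' * q' * (af' * bf') :=
      mul_le_mul_of_nonneg_left ihx' (mul_nonneg hq0 hq0)
    linarith
/-- **The van den Berg–Kesten inequality.** For a product probability measure on
`{0,1}ⁿ` and increasing events `A, B`, `μ(A □ B) ≤ μ(A) μ(B)`. -/
theorem van_den_Berg_Kesten
    {n : ℕ} (μi : Fin n → Measure Bool) [∀ i, IsProbabilityMeasure (μi i)]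
    (A B : Set (Fin n → Bool)) (hA : IsUpperSet A) (hB : IsUpperSet B) :
    Measure.pi μi (boxEvent A B) ≤ Measure.pi μi A * Measure.pi μi B :=
  BK_aux n μi inferInstance A B hA hB
end

section
/- For every real λ > 0 and every positive integer t, Σ_{i=0}^{t−1} log(λ/(λ + t − i)) ≤ ∫_0^t log(λ/(λ + t − x)) dx = −λ φ(t/λ); consequently ∏_{i=0}^{t−1} λ/(λ + t − i) ≤ exp(−λ φ(t/λ)), where φ(x) = (1+x)log(1+x) − x. -/
open MeasureTheory

/-- **Calculus step in the proof of the Chernoff-type bound.** For `λ > 0` and a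
positive integer `t`:
`Σ_{i=0}^{t-1} log(λ/(λ+t−i)) ≤ ∫_0^t log(λ/(λ+t−x)) dx = −λ φ(t/λ)`, and
consequently `∏_{i=0}^{t-1} λ/(λ+t−i) ≤ exp(−λ φ(t/λ))`. -/
theorem log_sum_integral_chernoff (lam : ℝ) (hlam : 0 < lam) (t : ℕ) (ht : 0 < t) :
    (∑ i ∈ Finset.range t, Real.log (lam / (lam + t - i)) ≤
      ∫ x in (0:ℝ)..(t:ℝ), Real.log (lam / (lam + t - x))) ∧
    (∫ x in (0:ℝ)..(t:ℝ), Real.log (lam / (lam + t - x))) =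
      -(lam * chernoffPhi (t / lam)) ∧
    ∏ i ∈ Finset.range t, lam / (lam + t - i) ≤
      Real.exp (-(lam * chernoffPhi (t / lam))) := by
  have hpos : ∀ x : ℝ, x ≤ t → 0 < lam + t - x := by
    intro x hx; linarith
  -- monotonicity of the integrand on [0, t]
  have hmono : MonotoneOn (fun x : ℝ => Real.log (lam / (lam + t - x)))
      (Set.Icc (0:ℝ) (0 + t)) := by
    intro x hx y hy hxy
    simp only [zero_add, Set.mem_Icc] at hx hy
    have hx' := hpos x hx.2
    have hy' := hpos y hy.2
    have h1 : lam / (lam + t - x) ≤ lam / (lam + t - y) := by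
      apply div_le_div_of_nonneg_left hlam.le hy'
      linarith
    exact Real.log_le_log (div_pos hlam hx') h1
  -- part 1 : the sum is at most the integral
  have hsum : ∑ i ∈ Finset.range t, Real.log (lam / (lam + t - i)) ≤
      ∫ x in (0:ℝ)..(t:ℝ), Real.log (lam / (lam + t - x)) := by
    have := hmono.sum_le_integral
    simpa using this
  -- part 2 : compute the integral
  have hint : (∫ x in (0:ℝ)..(t:ℝ), Real.log (lam / (lam + t - x))) =
      -(lam * chernoffPhi (t / lam)) := by
    have hcomp : (∫ x in (0:ℝ)..(t:ℝ), Real.log (lam / (lam + t - x)))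
        = ∫ u in lam..(lam + t), Real.log (lam / u) := by
      have := intervalIntegral.integral_comp_sub_left
        (f := fun u : ℝ => Real.log (lam / u)) (a := (0:ℝ)) (b := (t:ℝ)) (lam + t)
      simpa using this
    rw [hcomp]
    have hsubset : Set.uIcc lam (lam + (t:ℝ)) ⊆ {u : ℝ | 0 < u} := by
      rw [Set.uIcc_of_le (by linarith [Nat.cast_nonneg (α := ℝ) t])]
      intro u hu
      exact lt_of_lt_of_le hlam hu.1
    have hcongr : (∫ u in lam..(lam + t), Real.log (lam / u))
        = ∫ u in lam..(lam + t), (Real.log lam - Real.log u) := by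
      apply intervalIntegral.integral_congr
      intro u hu
      exact Real.log_div hlam.ne' (hsubset hu).ne'
    rw [hcongr]
    have hIlog : IntervalIntegrable Real.log volume lam (lam + t) := by
      apply intervalIntegral.intervalIntegrable_log
      intro h0
      simpa using hsubset h0
    rw [intervalIntegral.integral_sub intervalIntegrable_const hIlog,
      intervalIntegral.integral_const, integral_log]
    have h1 : (1 : ℝ) + t / lam = (lam + t) / lam := by field_simp
    have h2 : Real.log ((lam + t) / lam) = Real.log (lam + t) - Real.log lam :=
      Real.log_div (by positivity) hlam.ne'
    rw [chernoffPhi, h1, h2]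
    field_simp
    ring
  refine ⟨hsum, hint, ?_⟩
  -- part 3 : the product bound
  have hfpos : ∀ i ∈ Finset.range t, 0 < lam / (lam + t - i) := by
    intro i hi
    have hi' : (i : ℝ) < t := by exact_mod_cast Finset.mem_range.mp hi
    exact div_pos hlam (hpos i hi'.le)
  have hprodpos : 0 < ∏ i ∈ Finset.range t, lam / (lam + t - i) :=
    Finset.prod_pos hfpos
  have hlogprod : Real.log (∏ i ∈ Finset.range t, lam / (lam + t - i))
      = ∑ i ∈ Finset.range t, Real.log (lam / (lam + t - i)) :=
    Real.log_prod (fun i hi => (hfpos i hi).ne')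
  calc ∏ i ∈ Finset.range t, lam / (lam + t - i)
      = Real.exp (Real.log (∏ i ∈ Finset.range t, lam / (lam + t - i))) :=
        (Real.exp_log hprodpos).symm
    _ ≤ Real.exp (-(lam * chernoffPhi (t / lam))) := by
        apply Real.exp_le_exp.mpr
        rw [hlogprod]
        exact hint ▸ hsum
end
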